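/- Let P, Q, R be orthogonal projections on a complex Hilbert space H, and suppose the family {P, Q, R} is irreducible (the only closed subspaces invariant under all three are 0 and H) and that αP + βQ + δR = γ·I for positive reals α, β, δ, γ. Then dim H ≤ 2. -/

import Mathlib

lemma aux_rank_le_two {H : Type*} [NormedAddCommGroup H] [InnerProductSpace ℂ H] [CompleteSpace H]
    (P Q R : H →L[ℂ] H) (hQ2 : Q * Q = Q)
    (α β δ γ : ℝ) (hδ : 0 < δ)
    (heq : (α : ℂ) • P + (β : ℂ) • Q + (δ : ℂ) • R = (γ : ℂ) • (1 : H →L[ℂ] H))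
    (hirr : ∀ W : Submodule ℂ H, IsClosed (W : Set H) →
      (∀ x ∈ W, P x ∈ W) → (∀ x ∈ W, Q x ∈ W) → (∀ x ∈ W, R x ∈ W) →
      W = ⊥ ∨ W = ⊤)
    (v : H) (hv : v ≠ 0)
    (hPv : P v ∈ Submodule.span ℂ ({v, Q v} : Set H))
    (hPQv : P (Q v) ∈ Submodule.span ℂ ({v, Q v} : Set H)) :
    Module.rank ℂ H ≤ 2 := by
  have hδC : (δ : ℂ) ≠ 0 := by
    exact_mod_cast Complex.ofReal_ne_zero.mpr (ne_of_gt hδ)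
  have hRapp : ∀ x : H, R x = (δ : ℂ)⁻¹ • ((γ : ℂ) • x - (α : ℂ) • P x - (β : ℂ) • Q x) := by
    intro x
    have h := congrArg (fun T : H →L[ℂ] H => T x) heq
    simp only [ContinuousLinearMap.add_apply, ContinuousLinearMap.smul_apply,
      ContinuousLinearMap.one_apply] at h
    have : (δ : ℂ) • R x = (γ : ℂ) • x - (α : ℂ) • P x - (β : ℂ) • Q x := by
      rw [← h]; abel
    rw [← this, smul_smul, inv_mul_cancel₀ hδC, one_smul]
  set W : Submodule ℂ H := Submodule.span ℂ ({v, Q v} : Set H) with hW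
  have hvW : v ∈ W := Submodule.subset_span (by simp)
  have hQvW : Q v ∈ W := Submodule.subset_span (by simp)
  have hQQv : Q (Q v) = Q v := by
    have h := congrArg (fun T : H →L[ℂ] H => T v) hQ2
    simpa only [ContinuousLinearMap.mul_apply] using h
  have hPinv : ∀ x ∈ W, P x ∈ W := by
    intro x hx
    have hle : W ≤ Submodule.comap (P : H →ₗ[ℂ] H) W := by
      rw [hW, Submodule.span_le]
      rintro y (rfl | rfl)
      · exact hPv
      · simpa using hPQv
    simpa using hle hx
  have hQinv : ∀ x ∈ W, Q x ∈ W := by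
    intro x hx
    have hle : W ≤ Submodule.comap (Q : H →ₗ[ℂ] H) W := by
      rw [hW, Submodule.span_le]
      rintro y (rfl | rfl)
      · exact hQvW
      · simpa [hQQv] using hQvW
    simpa using hle hx
  have hRinv : ∀ x ∈ W, R x ∈ W := by
    intro x hx
    rw [hRapp x]
    exact W.smul_mem _ (W.sub_mem (W.sub_mem (W.smul_mem _ hx)
      (W.smul_mem _ (hPinv x hx))) (W.smul_mem _ (hQinv x hx)))
  haveI : FiniteDimensional ℂ W :=
    FiniteDimensional.span_of_finite ℂ (Set.toFinite _)
  have hclosed : IsClosed (W : Set H) := Submodule.closed_of_finiteDimensional W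
  rcases hirr W hclosed hPinv hQinv hRinv with hbot | htop
  · exact absurd (hbot ▸ hvW) (by simpa using hv)
  · have h1 : Module.rank ℂ H = Module.rank ℂ W := by
      rw [← rank_top ℂ H, htop]
    rw [h1, hW]
    refine le_trans (rank_span_le _) ?_
    refine le_trans (Cardinal.mk_insert_le) ?_
    simp only [Cardinal.mk_singleton]
    norm_num

theorem stmt_17 {H : Type*} [NormedAddCommGroup H] [InnerProductSpace ℂ H] [CompleteSpace H]
    (P Q R : H →L[ℂ] H)
    (hP : IsSelfAdjoint P) (hP2 : P * P = P)
    (hQ : IsSelfAdjoint Q) (hQ2 : Q * Q = Q)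
    (hR : IsSelfAdjoint R) (hR2 : R * R = R)
    (α β δ γ : ℝ) (hα : 0 < α) (hβ : 0 < β) (hδ : 0 < δ) (hγ : 0 < γ)
    (heq : (α : ℂ) • P + (β : ℂ) • Q + (δ : ℂ) • R = (γ : ℂ) • (1 : H →L[ℂ] H))
    (hirr : ∀ W : Submodule ℂ H, IsClosed (W : Set H) →
      (∀ x ∈ W, P x ∈ W) → (∀ x ∈ W, Q x ∈ W) → (∀ x ∈ W, R x ∈ W) →
      W = ⊥ ∨ W = ⊤) :
    Module.rank ℂ H ≤ 2 := by
  by_cases hex : ∃ v : H, v ≠ 0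
  case neg =>
    push_neg at hex
    haveI : Subsingleton H := ⟨fun x y => by rw [hex x, hex y]⟩
    rw [rank_subsingleton' ℂ H]
    exact le_of_lt (by norm_num)
  obtain ⟨v0, hv0⟩ := hex
  have hδC : (δ : ℂ) ≠ 0 := by
    exact_mod_cast Complex.ofReal_ne_zero.mpr (ne_of_gt hδ)
  have eq1 : (δ : ℂ) • R = (γ : ℂ) • (1 : H →L[ℂ] H) - (α : ℂ) • P - (β : ℂ) • Q := by
    rw [← heq]; abel
  by_cases hcomm : P * Q = Q * P
  case pos =>
    -- commuting case : ker P is invariant, so P = 0 or P = 1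
    have hPR : P * R = R * P := by
      have key : (δ : ℂ) • (P * R) = (δ : ℂ) • (R * P) := by
        calc (δ : ℂ) • (P * R) = P * ((δ : ℂ) • R) := (mul_smul_comm _ _ _).symm
          _ = (γ : ℂ) • P - (α : ℂ) • P - (β : ℂ) • (P * Q) := by
              rw [eq1]; simp only [mul_sub, mul_smul_comm, mul_one, hP2]
          _ = (γ : ℂ) • P - (α : ℂ) • P - (β : ℂ) • (Q * P) := by rw [hcomm]
          _ = ((γ : ℂ) • (1 : H →L[ℂ] H) - (α : ℂ) • P - (β : ℂ) • Q) * P := by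
              simp only [sub_mul, smul_mul_assoc, one_mul, hP2]
          _ = ((δ : ℂ) • R) * P := by rw [eq1]
          _ = (δ : ℂ) • (R * P) := smul_mul_assoc _ _ _
      exact smul_right_injective (H →L[ℂ] H) hδC key
    set K : Submodule ℂ H := LinearMap.ker (P : H →ₗ[ℂ] H) with hK
    have hKP : ∀ x ∈ K, P x ∈ K := by
      intro x hx
      rw [hK, LinearMap.mem_ker] at hx ⊢
      simp only [ContinuousLinearMap.coe_coe] at hx
      simp [hx]
    have hKQ : ∀ x ∈ K, Q x ∈ K := by
      intro x hx
      rw [hK, LinearMap.mem_ker] at hx ⊢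
      have : P (Q x) = Q (P x) := by
        have h := congrArg (fun T : H →L[ℂ] H => T x) hcomm
        simpa only [ContinuousLinearMap.mul_apply] using h
      simp only [ContinuousLinearMap.coe_coe] at hx
      simp [this, hx]
    have hKR : ∀ x ∈ K, R x ∈ K := by
      intro x hx
      rw [hK, LinearMap.mem_ker] at hx ⊢
      have : P (R x) = R (P x) := by
        have h := congrArg (fun T : H →L[ℂ] H => T x) hPR
        simpa only [ContinuousLinearMap.mul_apply] using h
      simp only [ContinuousLinearMap.coe_coe] at hx
      simp [this, hx]
    rcases hirr K (ContinuousLinearMap.isClosed_ker P) hKP hKQ hKR with hbot | htop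
    · -- ker P = ⊥, so P = 1
      have hP1 : ∀ y, P y = y := by
        intro y
        have h1 : P (P y - y) = 0 := by
          have h := congrArg (fun T : H →L[ℂ] H => T y) hP2
          simp only [ContinuousLinearMap.mul_apply] at h
          rw [map_sub, h, sub_self]
        have h2 : P y - y ∈ K := by rw [hK, LinearMap.mem_ker]; exact h1
        rw [hbot, Submodule.mem_bot] at h2
        exact sub_eq_zero.mp h2
      refine aux_rank_le_two P Q R hQ2 α β δ γ hδ heq hirr v0 hv0 ?_ ?_
      · rw [hP1]; exact Submodule.subset_span (by simp)
      · rw [hP1]; exact Submodule.subset_span (by simp)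
    · -- ker P = ⊤, so P = 0
      have hP0 : ∀ y, P y = 0 := by
        intro y
        have : y ∈ K := htop ▸ Submodule.mem_top
        rwa [hK, LinearMap.mem_ker] at this
      refine aux_rank_le_two P Q R hQ2 α β δ γ hδ heq hirr v0 hv0 ?_ ?_
      · rw [hP0]; exact Submodule.zero_mem _
      · rw [hP0]; exact Submodule.zero_mem _
  case neg =>
    -- noncommuting case
    have hab : (α * β : ℂ) ≠ 0 := by
      have : (α : ℂ) ≠ 0 := by exact_mod_cast Complex.ofReal_ne_zero.mpr (ne_of_gt hα)
      have h2 : (β : ℂ) ≠ 0 := by exact_mod_cast Complex.ofReal_ne_zero.mpr (ne_of_gt hβ)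
      exact mul_ne_zero this h2
    have key : ((γ : ℂ) • (1 : H →L[ℂ] H) - (α : ℂ) • P - (β : ℂ) • Q) *
        ((γ : ℂ) • (1 : H →L[ℂ] H) - (α : ℂ) • P - (β : ℂ) • Q) =
        (δ : ℂ) • ((γ : ℂ) • (1 : H →L[ℂ] H) - (α : ℂ) • P - (β : ℂ) • Q) := by
      rw [← eq1, smul_mul_smul_comm, hR2, smul_smul]
    have h1 : ((α * β : ℂ)) • (P * Q + Q * P) =
        ((δ * γ - γ * γ : ℂ)) • (1 : H →L[ℂ] H) +
        ((α * (2 * γ - α - δ) : ℂ)) • P + ((β * (2 * γ - β - δ) : ℂ)) • Q := by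
      have k := key
      simp only [sub_mul, mul_sub, smul_mul_smul_comm, one_mul, mul_one, hP2, hQ2,
        smul_smul, smul_sub, smul_mul_assoc, mul_smul_comm] at k
      linear_combination (norm := module) k
    set a : ℂ := ((α * β : ℂ))⁻¹ * (δ * γ - γ * γ) with ha
    set b : ℂ := ((α * β : ℂ))⁻¹ * (α * (2 * γ - α - δ)) with hb
    set c : ℂ := ((α * β : ℂ))⁻¹ * (β * (2 * γ - β - δ)) with hc
    have hPQ : P * Q + Q * P = a • (1 : H →L[ℂ] H) + b • P + c • Q := by
      have h := congrArg (fun X : H →L[ℂ] H => ((α * β : ℂ))⁻¹ • X) h1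
      simp only [smul_add, smul_smul] at h
      rw [inv_mul_cancel₀ hab] at h
      simp only [one_smul] at h
      exact h
    have hX : P * Q - Q * P ≠ 0 := sub_ne_zero.mpr hcomm
    have hc1 : c = 1 := by
      have e1 : P * (P * Q + Q * P) - (P * Q + Q * P) * P = P * Q - Q * P := by
        simp only [mul_add, add_mul, ← mul_assoc, hP2]
        rw [mul_assoc Q P P, hP2]
        abel
      have e2 : P * (a • (1 : H →L[ℂ] H) + b • P + c • Q) -
          (a • (1 : H →L[ℂ] H) + b • P + c • Q) * P = c • (P * Q - Q * P) := by
        simp only [mul_add, add_mul, mul_smul_comm, smul_mul_assoc, mul_one, one_mul,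
          hP2, smul_sub]
        abel
      have h2 : P * Q - Q * P = c • (P * Q - Q * P) := by
        rw [← e2, ← hPQ, e1]
      have h0 : (c - 1) • (P * Q - Q * P) = 0 := by
        rw [sub_smul, one_smul, ← h2, sub_self]
      rcases smul_eq_zero.mp h0 with h | h
      · exact sub_eq_zero.mp h
      · exact absurd h hX
    have hb1 : b = 1 := by
      have hX' : Q * P - P * Q ≠ 0 := sub_ne_zero.mpr (Ne.symm hcomm)
      have e1 : Q * (P * Q + Q * P) - (P * Q + Q * P) * Q = Q * P - P * Q := by
        simp only [mul_add, add_mul, ← mul_assoc, hQ2]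
        rw [mul_assoc P Q Q, hQ2]
        abel
      have e2 : Q * (a • (1 : H →L[ℂ] H) + b • P + c • Q) -
          (a • (1 : H →L[ℂ] H) + b • P + c • Q) * Q = b • (Q * P - P * Q) := by
        simp only [mul_add, add_mul, mul_smul_comm, smul_mul_assoc, mul_one, one_mul,
          hQ2, smul_sub]
        abel
      have h2 : Q * P - P * Q = b • (Q * P - P * Q) := by
        rw [← e2, ← hPQ, e1]
      have h0 : (b - 1) • (Q * P - P * Q) = 0 := by
        rw [sub_smul, one_smul, ← h2, sub_self]
      rcases smul_eq_zero.mp h0 with h | h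
      · exact sub_eq_zero.mp h
      · exact absurd h hX'
    have hPQP : P * Q * P = (a + 1) • P := by
      have h := congrArg (fun X : H →L[ℂ] H => X * P) hPQ
      simp only [add_mul, smul_mul_assoc, one_mul, hP2, hb1, hc1, one_smul,
        mul_assoc Q P P] at h
      have h' := add_right_cancel h
      rw [h', add_smul, one_smul]
    have ht : (a + 1 : ℂ) ≠ 0 := by
      intro h0
      have hPQP0 : P * Q * P = 0 := by rw [hPQP, h0, zero_smul]
      have hQP0 : Q * P = 0 := by
        ext x
        have hQQ : Q (Q (P x)) = Q (P x) := by
          have h := congrArg (fun T : H →L[ℂ] H => T (P x)) hQ2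
          simpa only [ContinuousLinearMap.mul_apply] using h
        have hz : P (Q (P x)) = 0 := by
          have h := congrArg (fun T : H →L[ℂ] H => T x) hPQP0
          simpa only [ContinuousLinearMap.mul_apply, ContinuousLinearMap.zero_apply] using h
        have hin : (inner ℂ (Q (P x)) (Q (P x)) : ℂ) = 0 := by
          calc (inner ℂ (Q (P x)) (Q (P x)) : ℂ) = inner ℂ (P x) (Q (Q (P x))) :=
                hQ.isSymmetric _ _
            _ = inner ℂ (P x) (Q (P x)) := by rw [hQQ]
            _ = inner ℂ x (P (Q (P x))) := hP.isSymmetric _ _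
            _ = 0 := by rw [hz, inner_zero_right]
        have := inner_self_eq_zero.mp hin
        simpa only [ContinuousLinearMap.mul_apply, ContinuousLinearMap.zero_apply] using this
      have hPQ0 : P * Q = 0 := by
        have hst : star (Q * P) = P * Q := by
          rw [star_mul, hP.star_eq, hQ.star_eq]
        rw [← hst, hQP0, star_zero]
      exact hcomm (by rw [hPQ0, hQP0])
    have hPne : P ≠ 0 := by
      intro h
      exact hcomm (by rw [h, zero_mul, mul_zero])
    have hxex : ∃ x : H, P x ≠ 0 := by
      by_contra h
      push_neg at h
      exact hPne (ContinuousLinearMap.ext fun x => by simpa using h x)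
    obtain ⟨x, hx⟩ := hxex
    set v : H := P x with hv
    have hPvv : P v = v := by
      have h := congrArg (fun T : H →L[ℂ] H => T x) hP2
      simpa only [ContinuousLinearMap.mul_apply] using h
    have hPQvv : P (Q v) = (a + 1) • v := by
      have h := congrArg (fun T : H →L[ℂ] H => T x) hPQP
      simpa only [ContinuousLinearMap.mul_apply, ContinuousLinearMap.smul_apply] using h
    refine aux_rank_le_two P Q R hQ2 α β δ γ hδ heq hirr v hx ?_ ?_
    · rw [hPvv]; exact Submodule.subset_span (by simp)
    · rw [hPQvv]
      exact Submodule.smul_mem _ _ (Submodule.subset_span (by simp))
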